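/- For any subset L of Minkowski space ℝ^{1+s}, the set L + W₁ (with W₁ the Rindler wedge) has causal complement equal to an intersection of translates of the closed opposite wedge; consequently if L is nonempty and bounded, (L + W₁)^c is a translate of the closed opposite wedge −W̄₁, i.e., there exists a ∈ ℝ^{1+s} with (L + W₁)^c = a − W̄₁. -/
import Mathlib


open Pointwise

/-- `z ∈ ℝ^{1+s}` is spacelike iff `z₀² < z₁² + ⋯ + z_s²`. -/
def Spacelike (s : ℕ) (z : Fin (s + 1) → ℝ) : Prop :=
  (z 0) ^ 2 < ∑ i ∈ Finset.univ.erase 0, (z i) ^ 2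

/-- The causal complement `M^c = {x : x - y is spacelike for all y ∈ M}`. -/
def causalComplement (s : ℕ) (M : Set (Fin (s + 1) → ℝ)) : Set (Fin (s + 1) → ℝ) :=
  {x | ∀ y ∈ M, Spacelike s (x - y)}

/-- The open Rindler wedge `W₁ = {x : x₁ > |x₀|}`. -/
def RindlerWedge (s : ℕ) : Set (Fin (s + 1) → ℝ) :=
  {x | |x 0| < x 1}

/-- The closed Rindler wedge `W̄₁ = {x : x₁ ≥ |x₀|}`. -/
def ClosedRindlerWedge (s : ℕ) : Set (Fin (s + 1) → ℝ) :=
  {x | |x 0| ≤ x 1}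

lemma one_ne_zero_fin {s : ℕ} (hs : 1 ≤ s) : (1 : Fin (s + 1)) ≠ 0 := by
  refine Fin.ne_of_val_ne ?_
  rw [Fin.val_one', Fin.val_zero, Nat.mod_eq_of_lt (by omega)]
  omega

/-- Membership in a translated reflected closed wedge. -/
lemma mem_sub_closedWedge {s : ℕ} (p x : Fin (s + 1) → ℝ) :
    x ∈ (fun w => p - w) '' ClosedRindlerWedge s ↔ |x 0 - p 0| ≤ p 1 - x 1 := by
  constructor
  · rintro ⟨w, hw, rfl⟩
    simp only [ClosedRindlerWedge, Set.mem_setOf_eq] at hw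
    simp only [Pi.sub_apply]
    rw [show p 0 - w 0 - p 0 = -(w 0) by ring, abs_neg]
    linarith
  · intro h
    refine ⟨p - x, ?_, by funext i; simp⟩
    simp only [ClosedRindlerWedge, Set.mem_setOf_eq, Pi.sub_apply]
    rwa [abs_sub_comm]

/-- First half: the causal complement of `L + W₁` is the intersection of
translated reflected closed wedges. -/
lemma causal_eq_iInter (s : ℕ) (hs : 1 ≤ s) (L : Set (Fin (s + 1) → ℝ)) :
    causalComplement s (L + RindlerWedge s) =
      ⋂ p ∈ L, (fun w => p - w) '' ClosedRindlerWedge s := by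
  have h10 : (1 : Fin (s + 1)) ≠ 0 := one_ne_zero_fin hs
  have h1mem : (1 : Fin (s + 1)) ∈ Finset.univ.erase 0 :=
    Finset.mem_erase.mpr ⟨h10, Finset.mem_univ _⟩
  ext x
  simp only [causalComplement, Set.mem_setOf_eq, Set.mem_iInter, mem_sub_closedWedge]
  constructor
  · -- forward: if spacelike to everything in L + W₁ then in each translated wedge
    intro h p hp
    by_contra hc
    push_neg at hc
    -- hc : p 1 - x 1 < |x 0 - p 0|
    -- choose a lightlike direction witness
    have key : ∀ c : ℝ, 0 < c → (x 1 - p 1 - c = x 0 - p 0 ∨ x 1 - p 1 - c = -(x 0 - p 0)) →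
        False := by
      intro c hc0 hcase
      set w : Fin (s + 1) → ℝ := fun i => if i = 0 then 0 else if i = 1 then c else x i - p i
        with hw
      have hwW : w ∈ RindlerWedge s := by
        simp only [RindlerWedge, Set.mem_setOf_eq, hw]
        simp [h10, abs_of_nonneg, hc0]
      have hsp := h (p + w) ⟨p, hp, w, hwW, rfl⟩
      simp only [Spacelike] at hsp
      have hz0 : (x - (p + w)) 0 = x 0 - p 0 := by
        simp [hw, Pi.sub_apply, Pi.add_apply]
      have hsum : ∑ i ∈ Finset.univ.erase 0, ((x - (p + w)) i) ^ 2 = (x 0 - p 0) ^ 2 := by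
        rw [Finset.sum_eq_single_of_mem 1 h1mem]
        · have : (x - (p + w)) 1 = x 1 - p 1 - c := by
            simp [hw, Pi.sub_apply, Pi.add_apply, h10]; ring
          rw [this]
          rcases hcase with hc1 | hc1 <;> rw [hc1] <;> ring
        · intro i hi hne
          have hi0 : i ≠ 0 := (Finset.mem_erase.mp hi).1
          have : (x - (p + w)) i = 0 := by
            simp [hw, Pi.sub_apply, Pi.add_apply, hi0, hne]
          rw [this]; ring
      rw [hz0, hsum] at hsp
      exact lt_irrefl _ hsp
    rcases abs_cases (x 0 - p 0) with ⟨habs, _⟩ | ⟨habs, _⟩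
    · -- |x0 - p0| = x0 - p0, take c = (x1 - p1) - (x0 - p0)... need u1 - c = ± u0 with c>0
      -- here u1 + |u0| > 0 means u1 + u0 > 0? no: p1 - x1 < |x0-p0| means x1 - p1 > -|u0|
      -- take c = (x1 - p1) + (x0 - p0) > 0, then u1 - c = -(x0 - p0)
      exact key ((x 1 - p 1) + (x 0 - p 0)) (by rw [habs] at hc; linarith)
        (Or.inr (by ring))
    · exact key ((x 1 - p 1) - (x 0 - p 0)) (by rw [habs] at hc; linarith)
        (Or.inl (by ring))
  · -- reverse
    intro h y hy
    obtain ⟨p, hp, w, hwW, rfl⟩ := hy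
    simp only [RindlerWedge, Set.mem_setOf_eq] at hwW
    have hx := h p hp
    simp only [Spacelike]
    set z := x - (p + w) with hz
    have hz0 : z 0 = x 0 - p 0 - w 0 := by simp [hz]; ring
    have hz1 : z 1 = x 1 - p 1 - w 1 := by simp [hz]; ring
    have habs : |z 0| < -(z 1) := by
      rw [hz0, hz1]
      calc |x 0 - p 0 - w 0| ≤ |x 0 - p 0| + |w 0| := by
            rw [sub_eq_add_neg (x 0 - p 0)]
            exact (abs_add_le _ _).trans (by rw [abs_neg])
        _ < (p 1 - x 1) + w 1 := by linarith
        _ = -(x 1 - p 1 - w 1) := by ring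
    have hlt : (z 0) ^ 2 < (z 1) ^ 2 := by
      have h2 : |z 0| ^ 2 < (-(z 1)) ^ 2 :=
        pow_lt_pow_left₀ habs (abs_nonneg _) two_ne_zero
      rwa [sq_abs, neg_pow, show (-1 : ℝ) ^ 2 * z 1 ^ 2 = z 1 ^ 2 by ring] at h2
    refine hlt.trans_le ?_
    exact Finset.single_le_sum (fun i _ => sq_nonneg (z i)) h1mem

/-- `(L + W₁)^c` is the intersection of the translated closed opposite wedges
`p - W̄₁`, `p ∈ L`; and for nonempty bounded `L` it is a single translate
`a - W̄₁` of the closed opposite wedge. -/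
theorem causalComplement_set_plus_wedge (s : ℕ) (hs : 1 ≤ s)
    (L : Set (Fin (s + 1) → ℝ)) (hne : L.Nonempty) (hbd : Bornology.IsBounded L) :
    causalComplement s (L + RindlerWedge s) =
        ⋂ p ∈ L, (fun w => p - w) '' ClosedRindlerWedge s ∧
      ∃ a : Fin (s + 1) → ℝ,
        causalComplement s (L + RindlerWedge s) =
          (fun w => a - w) '' ClosedRindlerWedge s := by
  have h10 : (1 : Fin (s + 1)) ≠ 0 := one_ne_zero_fin hs
  refine ⟨causal_eq_iInter s hs L, ?_⟩
  obtain ⟨R, hR⟩ := hbd.exists_norm_le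
  set f : (Fin (s + 1) → ℝ) → ℝ := fun p => p 0 + p 1 with hf
  set g : (Fin (s + 1) → ℝ) → ℝ := fun p => p 1 - p 0 with hg
  have hbdd : ∀ p ∈ L, -2 * R ≤ f p ∧ -2 * R ≤ g p := by
    intro p hp
    have h0 : |p 0| ≤ R := (norm_le_pi_norm p 0).trans (hR p hp)
    have h1 : |p 1| ≤ R := (norm_le_pi_norm p 1).trans (hR p hp)
    rw [abs_le] at h0 h1
    constructor <;> simp only [hf, hg] <;> · linarith [h0.1, h0.2, h1.1, h1.2]
  have hbf : BddBelow (f '' L) := ⟨-2 * R, by rintro _ ⟨p, hp, rfl⟩; exact (hbdd p hp).1⟩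
  have hbg : BddBelow (g '' L) := ⟨-2 * R, by rintro _ ⟨p, hp, rfl⟩; exact (hbdd p hp).2⟩
  set α := sInf (f '' L) with hα
  set β := sInf (g '' L) with hβ
  set a : Fin (s + 1) → ℝ := fun i => if i = 0 then (α - β) / 2 else
    if i = 1 then (α + β) / 2 else 0 with ha
  have ha0 : a 0 = (α - β) / 2 := by simp [ha]
  have ha1 : a 1 = (α + β) / 2 := by simp [ha, h10]
  refine ⟨a, ?_⟩
  rw [causal_eq_iInter s hs L]
  ext x
  simp only [Set.mem_iInter, mem_sub_closedWedge, abs_le]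
  constructor
  · intro h
    have hfa : x 0 + x 1 ≤ α :=
      le_csInf (hne.image f) (by rintro _ ⟨p, hp, rfl⟩; have := h p hp; simp only [hf]; linarith [this.1, this.2])
    have hga : x 1 - x 0 ≤ β :=
      le_csInf (hne.image g) (by rintro _ ⟨p, hp, rfl⟩; have := h p hp; simp only [hg]; linarith [this.1, this.2])
    rw [ha0, ha1]
    constructor <;> linarith
  · intro h p hp
    rw [ha0, ha1] at h
    have hfp : α ≤ f p := csInf_le hbf ⟨p, hp, rfl⟩
    have hgp : β ≤ g p := csInf_le hbg ⟨p, hp, rfl⟩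
    simp only [hf, hg] at hfp hgp
    constructor <;> linarith [h.1, h.2]
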